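/- Let n ≥ 1, let g : Fin n → ℝ, and let λ > 0. Any probability vector p on Fin n that attains the maximum of the entropy-regularized objective ∑_i p_i g_i − λ ∑_i p_i log p_i (with the convention 0·log 0 = 0) is equal to the Gibbs/softmax distribution p*_i = exp(g_i/λ) / ∑_j exp(g_j/λ); i.e., the maximizer is unique. -/

import Mathlib

open Finset

/-- Pointwise Gibbs inequality: `a * (log b - log a) ≤ b - a`, strict if `a ≠ b`. -/
lemma gibbs_pointwise {a b : ℝ} (ha : 0 ≤ a) (hb : 0 < b) (hab : a ≠ b) :
    a * (Real.log b - Real.log a) < b - a := by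
  rcases ha.eq_or_lt with h | h
  · simpa [← h] using hb
  · have hba : b / a ≠ 1 := by
      intro hh
      exact hab ((div_eq_one_iff_eq h.ne').mp hh).symm
    have := Real.log_lt_sub_one_of_pos (div_pos hb h) hba
    rw [Real.log_div hb.ne' h.ne'] at this
    have := (mul_lt_mul_iff_right₀ h).mpr this
    calc a * (Real.log b - Real.log a) < a * (b / a - 1) := this
      _ = b - a := by field_simp

/-- **Uniqueness of the entropy-regularized maximizer.**
For `n ≥ 1`, `g : Fin n → ℝ` and `λ > 0`, any probability vector `p` on `Fin n` attaining the
maximum of the entropy-regularized objective `∑ i, p i * g i - λ * ∑ i, p i * log (p i)`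
(with the convention `0 * log 0 = 0`, which holds since `Real.log 0 = 0`) equals the
Gibbs/softmax distribution `p* i = exp (g i / λ) / ∑ j, exp (g j / λ)`. -/
theorem entropy_regularized_maximizer_unique
    (n : ℕ) (hn : 1 ≤ n) (g : Fin n → ℝ) (lam : ℝ) (hlam : 0 < lam)
    (p : Fin n → ℝ) (hp0 : ∀ i, 0 ≤ p i) (hp1 : (∑ i, p i) = 1)
    (hmax : ∀ q : Fin n → ℝ, (∀ i, 0 ≤ q i) → (∑ i, q i) = 1 →
      ∑ i, q i * g i - lam * ∑ i, q i * Real.log (q i) ≤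
        ∑ i, p i * g i - lam * ∑ i, p i * Real.log (p i)) :
    p = fun i => Real.exp (g i / lam) / ∑ j, Real.exp (g j / lam) := by
  set Z : ℝ := ∑ j, Real.exp (g j / lam) with hZdef
  have hZpos : 0 < Z := by
    apply Finset.sum_pos (fun j _ => Real.exp_pos _)
    exact Finset.univ_nonempty_iff.mpr ⟨⟨0, hn⟩⟩
  set q : Fin n → ℝ := fun i => Real.exp (g i / lam) / Z with hqdef
  have hq0 : ∀ i, 0 < q i := fun i => div_pos (Real.exp_pos _) hZpos
  have hq1 : (∑ i, q i) = 1 := by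
    rw [hqdef, ← Finset.sum_div, ← hZdef, div_self hZpos.ne']
  have hlogq : ∀ i, Real.log (q i) = g i / lam - Real.log Z := fun i => by
    rw [hqdef, Real.log_div (Real.exp_pos _).ne' hZpos.ne', Real.log_exp]
  have hgq : ∀ i, g i = lam * Real.log (q i) + lam * Real.log Z := fun i => by
    rw [hlogq i]; field_simp; ring
  -- objective of q equals lam * log Z
  have hobjq : ∑ i, q i * g i - lam * ∑ i, q i * Real.log (q i) = lam * Real.log Z := by
    rw [Finset.mul_sum, ← Finset.sum_sub_distrib]
    have : ∀ i ∈ Finset.univ, q i * g i - lam * (q i * Real.log (q i))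
        = lam * Real.log Z * q i := by
      intro i _
      rw [hgq i]; ring
    rw [Finset.sum_congr rfl this, ← Finset.mul_sum, hq1, mul_one]
  by_contra hne
  have hex : ∃ i, p i ≠ q i := by
    by_contra h
    push_neg at h
    exact hne (funext h)
  obtain ⟨i₀, hi₀⟩ := hex
  -- strict inequality for objective of p
  have hle : ∀ i ∈ Finset.univ, p i * g i - lam * (p i * Real.log (p i))
      ≤ lam * Real.log Z * p i + lam * (q i - p i) := by
    intro i _
    rw [hgq i]
    have key : p i * (Real.log (q i) - Real.log (p i)) ≤ q i - p i := by
      rcases eq_or_ne (p i) (q i) with h | h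
      · rw [h]; simp
      · exact (gibbs_pointwise (hp0 i) (hq0 i) h).le
    nlinarith [hlam]
  have hlt : p i₀ * g i₀ - lam * (p i₀ * Real.log (p i₀))
      < lam * Real.log Z * p i₀ + lam * (q i₀ - p i₀) := by
    rw [hgq i₀]
    have key := gibbs_pointwise (hp0 i₀) (hq0 i₀) hi₀
    nlinarith [hlam]
  have hsum : ∑ i, (p i * g i - lam * (p i * Real.log (p i)))
      < ∑ i, (lam * Real.log Z * p i + lam * (q i - p i)) :=
    Finset.sum_lt_sum hle ⟨i₀, Finset.mem_univ i₀, hlt⟩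
  have hrhs : ∑ i, (lam * Real.log Z * p i + lam * (q i - p i)) = lam * Real.log Z := by
    rw [Finset.sum_add_distrib, ← Finset.mul_sum, hp1, ← Finset.mul_sum,
      Finset.sum_sub_distrib, hq1, hp1]
    ring
  have hobjp : ∑ i, p i * g i - lam * ∑ i, p i * Real.log (p i) < lam * Real.log Z := by
    rw [Finset.mul_sum, ← Finset.sum_sub_distrib]
    rw [hrhs] at hsum
    exact hsum
  have := hmax q (fun i => (hq0 i).le) hq1
  rw [hobjq] at this
  linarith
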